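/- Let m ≥ 1, A ∈ [0,1]^{m×n}, b ∈ [1,∞)^m, and W ≥ 1 with W·A_{ij} ≤ b_i for all i ∈ [m], j ∈ [n]. Let f : 2^[n] → ℝ₊ be a normalized monotone submodular set function and set λ = e^W·m. Let ∅ = S_0 ⊂ S_1 ⊂ ⋯ ⊂ S_t ⊆ [n] be a chain with S_ℓ = S_{ℓ−1} ∪ {γ_ℓ}, γ_ℓ ∉ S_{ℓ−1}, and define weights w_{iℓ} = (1/b_i)·λ^{(Σ_{j∈S_ℓ} A_{ij})/b_i} (so w_{i0} = 1/b_i). Assume for every ℓ ∈ {1,…,t}: (i) δ_ℓ := f(S_ℓ) − f(S_{ℓ−1}) > 0, and (ii) γ_ℓ minimizes the weight-to-marginal ratio, i.e., f_{S_{ℓ−1}}(j) · Σ_{i=1}^m A_{iγ_ℓ} w_{i(ℓ−1)} ≤ δ_ℓ · Σ_{i=1}^m A_{ij} w_{i(ℓ−1)} for every j ∈ [n]∖S_{ℓ−1}. Let S* ⊆ [n] be feasible (Σ_{j∈S*} A_{ij} ≤ b_i for all i) with f(S*) > f(S_t). If Σ_{i=1}^m b_i w_{it} > e^W·m, then f(S_t)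 ≥ f(S*) / (e·m^{1/W} + 1). -/

import Mathlib

open Finset

lemma convex_rpow_bound' {lam W x : ℝ} (hlam : 1 ≤ lam) (hW : 0 < W)
    (hx0 : 0 ≤ x) (hx1 : W * x ≤ 1) :
    lam ^ x ≤ 1 + (lam ^ (1 / W) - 1) * (W * x) := by
  have hlampos : (0:ℝ) < lam := lt_of_lt_of_le one_pos hlam
  set s := W * x with hs
  have hs0 : 0 ≤ s := mul_nonneg hW.le hx0
  have h1s : 0 ≤ 1 - s := by linarith
  have key := convexOn_exp.2 (Set.mem_univ (0:ℝ))
      (Set.mem_univ ((1/W) * Real.log lam)) h1s hs0 (by ring)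
  simp only [smul_eq_mul, mul_zero, zero_add, Real.exp_zero, mul_one] at key
  have e1 : lam ^ x = Real.exp (s * ((1/W) * Real.log lam)) := by
    rw [Real.rpow_def_of_pos hlampos]
    congr 1
    rw [hs]
    field_simp
  have e2 : lam ^ (1/W) = Real.exp ((1/W) * Real.log lam) := by
    rw [Real.rpow_def_of_pos hlampos, mul_comm]
  rw [e1, e2]
  calc Real.exp (s * ((1/W) * Real.log lam))
      ≤ (1-s) + s * Real.exp ((1/W) * Real.log lam) := key
    _ = 1 + (Real.exp ((1/W) * Real.log lam) - 1) * s := by ring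

lemma submod_telescope' {n : ℕ} (f : Finset (Fin n) → ℝ)
    (hsub : ∀ S T : Finset (Fin n), f (S ∪ T) + f (S ∩ T) ≤ f S + f T)
    (S : Finset (Fin n)) (T : Finset (Fin n)) :
    f (S ∪ T) - f S ≤ ∑ j ∈ T \ S, (f (insert j S) - f S) := by
  induction T using Finset.induction_on with
  | empty => simp
  | @insert a T ha ih =>
    by_cases haS : a ∈ S
    · have h1 : S ∪ insert a T = S ∪ T := by
        rw [Finset.union_insert, Finset.insert_eq_self.mpr (Finset.mem_union_left _ haS)]
      have h2 : insert a T \ S = T \ S := Finset.insert_sdiff_of_mem _ haS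
      rw [h1, h2]; exact ih
    · have h2 : insert a T \ S = insert a (T \ S) := Finset.insert_sdiff_of_notMem _ haS
      have hnotm : a ∉ T \ S := fun h => ha (Finset.mem_sdiff.mp h).1
      rw [h2, Finset.sum_insert hnotm]
      have hsub' := hsub (insert a S) (S ∪ T)
      have hinter : insert a S ∩ (S ∪ T) = S := by
        ext x
        simp only [Finset.mem_inter, Finset.mem_insert, Finset.mem_union]
        constructor
        · rintro ⟨(rfl | hx), h⟩
          · rcases h with h | h
            · exact h
            · exact absurd h ha
          · exact hx
        · intro hx; exact ⟨Or.inr hx, Or.inl hx⟩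
      have hunion : insert a S ∪ (S ∪ T) = S ∪ insert a T := by
        ext x
        simp only [Finset.mem_union, Finset.mem_insert]
        tauto
      rw [hunion, hinter] at hsub'
      linarith

/-- Main approximation lemma for the multiplicative-updates
algorithm with update factor `λ = e^W·m`: if the main loop (greedy selection by
minimal weight-to-marginal ratio, multiplicative weight updates
`w_{iℓ} = (1/b_i)·λ^{(Σ_{j∈S_ℓ} A_{ij})/b_i}`) terminates with
`Σ_i b_i w_{it} > e^W·m`, and `S*` is feasible with `f(S*) > f(S_t)`, then
`f(S_t) ≥ f(S*) / (e·m^{1/W} + 1)`. -/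
theorem stmt_4 (m n t : ℕ) (hm : 1 ≤ m)
    (A : Fin m → Fin n → ℝ) (hA : ∀ i j, 0 ≤ A i j ∧ A i j ≤ 1)
    (b : Fin m → ℝ) (hb : ∀ i, 1 ≤ b i)
    (W : ℝ) (hW : 1 ≤ W) (hwidth : ∀ i j, W * A i j ≤ b i)
    (f : Finset (Fin n) → ℝ)
    (hf_nonneg : ∀ S, 0 ≤ f S)
    (hf_norm : f ∅ = 0)
    (hf_mono : ∀ S T : Finset (Fin n), S ⊆ T → f S ≤ f T)
    (hf_submod : ∀ S T : Finset (Fin n), f (S ∪ T) + f (S ∩ T) ≤ f S + f T)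
    (lam : ℝ) (hlam : lam = Real.exp W * m)
    (S : ℕ → Finset (Fin n)) (γ : ℕ → Fin n)
    (hS0 : S 0 = ∅)
    (hchain : ∀ ℓ, 1 ≤ ℓ → ℓ ≤ t →
      γ ℓ ∉ S (ℓ - 1) ∧ S ℓ = insert (γ ℓ) (S (ℓ - 1)))
    (w : Fin m → ℕ → ℝ)
    (hw : ∀ i ℓ, w i ℓ = (1 / b i) * lam ^ ((∑ j ∈ S ℓ, A i j) / b i))
    (hδ : ∀ ℓ, 1 ≤ ℓ → ℓ ≤ t → 0 < f (S ℓ) - f (S (ℓ - 1)))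
    (hgreedy : ∀ ℓ, 1 ≤ ℓ → ℓ ≤ t → ∀ j : Fin n, j ∉ S (ℓ - 1) →
      (f (insert j (S (ℓ - 1))) - f (S (ℓ - 1))) * ∑ i, A i (γ ℓ) * w i (ℓ - 1)
        ≤ (f (S ℓ) - f (S (ℓ - 1))) * ∑ i, A i j * w i (ℓ - 1))
    (Sstar : Finset (Fin n))
    (hfeas : ∀ i, ∑ j ∈ Sstar, A i j ≤ b i)
    (hopt : f (S t) < f Sstar)
    (hterm : Real.exp W * m < ∑ i, b i * w i t) :
    f (S t) ≥ f Sstar / (Real.exp 1 * (m : ℝ) ^ (1 / W) + 1) := by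
  have hWpos : (0:ℝ) < W := lt_of_lt_of_le one_pos hW
  have hbpos : ∀ i, (0:ℝ) < b i := fun i => lt_of_lt_of_le one_pos (hb i)
  have hm1 : (1:ℝ) ≤ (m:ℝ) := by exact_mod_cast hm
  have hm0 : (0:ℝ) < (m:ℝ) := lt_of_lt_of_le one_pos hm1
  have hexpW1 : (1:ℝ) ≤ Real.exp W := by
    rw [show (1:ℝ) = Real.exp 0 by simp]
    exact Real.exp_le_exp.mpr (by linarith)
  have hlam1 : (1:ℝ) ≤ lam := by rw [hlam]; nlinarith
  have hlampos : (0:ℝ) < lam := lt_of_lt_of_le one_pos hlam1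
  have wpos : ∀ i ℓ, 0 < w i ℓ := by
    intro i ℓ
    rw [hw]
    exact mul_pos (one_div_pos.mpr (hbpos i)) (Real.rpow_pos_of_pos hlampos _)
  set L := lam ^ (1/W : ℝ) with hLdef
  have hL1 : (1:ℝ) ≤ L := Real.one_le_rpow hlam1 (by positivity)
  have hKW : (0:ℝ) ≤ (L - 1) * W := mul_nonneg (by linarith) hWpos.le
  set D := f Sstar - f (S t) with hDdef
  have hD : 0 < D := sub_pos.mpr hopt
  set Phi : ℕ → ℝ := fun ℓ => ∑ i, b i * w i ℓ with hPhidef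
  have Phipos : ∀ ℓ, 0 < Phi ℓ := by
    intro ℓ
    have : Nonempty (Fin m) := ⟨⟨0, hm⟩⟩
    exact Finset.sum_pos (fun i _ => mul_pos (hbpos i) (wpos i ℓ)) Finset.univ_nonempty
  have Phi0 : Phi 0 = m := by
    have : ∀ i : Fin m, b i * w i 0 = 1 := by
      intro i
      rw [hw, hS0]
      simp only [Finset.sum_empty, zero_div, Real.rpow_zero, mul_one]
      field_simp
      exact div_self (hbpos i).ne'
    simp only [hPhidef, this]
    simp
  -- chain subsets
  have hstep : ∀ ℓ, ℓ < t → S ℓ ⊆ S (ℓ+1) := by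
    intro ℓ hℓ
    have hc := (hchain (ℓ+1) (Nat.le_add_left 1 ℓ) hℓ).2
    simp only [Nat.add_sub_cancel] at hc
    rw [hc]
    exact Finset.subset_insert _ _
  have hsubset : ∀ k, k ≤ t → ∀ ℓ, ℓ ≤ k → S ℓ ⊆ S k := by
    intro k
    induction k with
    | zero => intro _ ℓ hℓ; rw [Nat.le_zero.mp hℓ]
    | succ k ih =>
      intro hk ℓ hℓ
      rcases Nat.lt_or_ge ℓ (k+1) with h | h
      · exact (ih (Nat.le_of_succ_le hk) ℓ (Nat.lt_succ_iff.mp h)).trans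
          (hstep k (Nat.lt_of_succ_le hk))
      · rw [le_antisymm hℓ h]
  -- main potential bound
  have main : ∀ ℓ, ℓ ≤ t → Phi ℓ ≤ m * Real.exp ((L-1)*W * f (S ℓ) / D) := by
    intro ℓ
    induction ℓ with
    | zero =>
      intro _
      rw [Phi0, hS0, hf_norm]
      simp
    | succ ℓ ih =>
      intro hℓt
      have hℓ : ℓ ≤ t := Nat.le_of_succ_le hℓt
      have hc := hchain (ℓ+1) (Nat.le_add_left 1 ℓ) hℓt
      simp only [Nat.add_sub_cancel] at hc
      obtain ⟨hc1, hc2⟩ := hc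
      set g := γ (ℓ+1) with hgdef
      set δ := f (S (ℓ+1)) - f (S ℓ) with hδdef
      have hδpos : 0 < δ := by
        have h := hδ (ℓ+1) (Nat.le_add_left 1 ℓ) hℓt
        simp only [Nat.add_sub_cancel] at h
        rw [hδdef]
        linarith
      have hwstep : ∀ i, w i (ℓ+1) = w i ℓ * lam ^ (A i g / b i) := by
        intro i
        rw [hw, hw, hc2, Finset.sum_insert hc1, add_div, Real.rpow_add hlampos]
        ring
      have hbound : ∀ i, b i * w i (ℓ+1) ≤ b i * w i ℓ + (L-1)*W * (A i g * w i ℓ) := by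
        intro i
        have hbne : b i ≠ 0 := (hbpos i).ne'
        have hxW : W * (A i g / b i) ≤ 1 := by
          rw [← mul_div_assoc, div_le_one (hbpos i)]
          exact hwidth i g
        have h := convex_rpow_bound' hlam1 hWpos
          (div_nonneg (hA i g).1 (hbpos i).le) hxW
        have hw0 : 0 ≤ w i ℓ := (wpos i ℓ).le
        rw [hwstep i]
        calc b i * (w i ℓ * lam ^ (A i g / b i))
            ≤ b i * (w i ℓ * (1 + (L-1) * (W * (A i g / b i)))) := by
              apply mul_le_mul_of_nonneg_left
                (mul_le_mul_of_nonneg_left h hw0) (hbpos i).le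
          _ = b i * w i ℓ + (L-1)*W * (A i g * w i ℓ) := by
              field_simp
      have hPhiStep : Phi (ℓ+1) ≤ Phi ℓ + (L-1)*W * ∑ i, A i g * w i ℓ := by
        calc Phi (ℓ+1) ≤ ∑ i, (b i * w i ℓ + (L-1)*W * (A i g * w i ℓ)) :=
              Finset.sum_le_sum (fun i _ => hbound i)
          _ = Phi ℓ + (L-1)*W * ∑ i, A i g * w i ℓ := by
              rw [Finset.sum_add_distrib, ← Finset.mul_sum]
      have hY0 : 0 ≤ ∑ i, A i g * w i ℓ :=
        Finset.sum_nonneg fun i _ => mul_nonneg (hA i g).1 (wpos i ℓ).le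
      -- greedy summed over Sstar \ S ℓ
      have hXY : (∑ j ∈ Sstar \ S ℓ, (f (insert j (S ℓ)) - f (S ℓ)))
            * (∑ i, A i g * w i ℓ) ≤ δ * Phi ℓ := by
        calc (∑ j ∈ Sstar \ S ℓ, (f (insert j (S ℓ)) - f (S ℓ)))
              * (∑ i, A i g * w i ℓ)
            = ∑ j ∈ Sstar \ S ℓ,
                (f (insert j (S ℓ)) - f (S ℓ)) * (∑ i, A i g * w i ℓ) :=
              Finset.sum_mul _ _ _
          _ ≤ ∑ j ∈ Sstar \ S ℓ, δ * ∑ i, A i j * w i ℓ := by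
              apply Finset.sum_le_sum
              intro j hj
              have hjnot : j ∉ S ℓ := (Finset.mem_sdiff.mp hj).2
              have := hgreedy (ℓ+1) (Nat.le_add_left 1 ℓ) hℓt j
                (by simpa using hjnot)
              simpa using this
          _ = δ * ∑ j ∈ Sstar \ S ℓ, ∑ i, A i j * w i ℓ :=
              (Finset.mul_sum _ _ _).symm
          _ ≤ δ * ∑ j ∈ Sstar, ∑ i, A i j * w i ℓ := by
              apply mul_le_mul_of_nonneg_left _ hδpos.le
              apply Finset.sum_le_sum_of_subset_of_nonneg (Finset.sdiff_subset)
              intro j _ _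
              exact Finset.sum_nonneg fun i _ => mul_nonneg (hA i j).1 (wpos i ℓ).le
          _ = ∑ i, δ * ((∑ j ∈ Sstar, A i j) * w i ℓ) := by
              simp only [Finset.sum_mul, Finset.mul_sum]
              rw [Finset.sum_comm]
          _ ≤ ∑ i, δ * (b i * w i ℓ) := by
              apply Finset.sum_le_sum
              intro i _
              exact mul_le_mul_of_nonneg_left
                (mul_le_mul_of_nonneg_right (hfeas i) (wpos i ℓ).le) hδpos.le
          _ = δ * Phi ℓ := (Finset.mul_sum _ _ _).symm
      have hX : D ≤ ∑ j ∈ Sstar \ S ℓ, (f (insert j (S ℓ)) - f (S ℓ)) := by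
        have h1 := submod_telescope' f hf_submod (S ℓ) Sstar
        have h2 : f Sstar ≤ f (S ℓ ∪ Sstar) :=
          hf_mono _ _ Finset.subset_union_right
        have h3 : f (S ℓ) ≤ f (S t) := hf_mono _ _ (hsubset t le_rfl ℓ hℓ)
        rw [hDdef]
        linarith
      have hY : (∑ i, A i g * w i ℓ) ≤ δ * Phi ℓ / D := by
        rw [le_div_iff₀ hD]
        calc (∑ i, A i g * w i ℓ) * D
            ≤ (∑ j ∈ Sstar \ S ℓ, (f (insert j (S ℓ)) - f (S ℓ)))
                * (∑ i, A i g * w i ℓ) := by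
              rw [mul_comm]
              exact mul_le_mul_of_nonneg_right hX hY0
          _ ≤ δ * Phi ℓ := hXY
      have hPhi2 : Phi (ℓ+1) ≤ Phi ℓ * (1 + (L-1)*W*δ/D) := by
        have h := mul_le_mul_of_nonneg_left hY hKW
        calc Phi (ℓ+1) ≤ Phi ℓ + (L-1)*W * (δ * Phi ℓ / D) := by linarith
          _ = Phi ℓ * (1 + (L-1)*W*δ/D) := by ring
      have hexp : 1 + (L-1)*W*δ/D ≤ Real.exp ((L-1)*W*δ/D) := by
        have := Real.add_one_le_exp ((L-1)*W*δ/D)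
        linarith
      calc Phi (ℓ+1) ≤ Phi ℓ * (1 + (L-1)*W*δ/D) := hPhi2
        _ ≤ Phi ℓ * Real.exp ((L-1)*W*δ/D) :=
            mul_le_mul_of_nonneg_left hexp (Phipos ℓ).le
        _ ≤ (m * Real.exp ((L-1)*W * f (S ℓ) / D)) * Real.exp ((L-1)*W*δ/D) :=
            mul_le_mul_of_nonneg_right (ih hℓ) (Real.exp_pos _).le
        _ = m * Real.exp ((L-1)*W * f (S (ℓ+1)) / D) := by
            rw [mul_assoc, ← Real.exp_add]
            congr 2
            rw [hδdef]
            ring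
  -- conclude
  have hT : Phi t ≤ m * Real.exp ((L-1)*W * f (S t) / D) := main t le_rfl
  have h1 : Real.exp W < Real.exp ((L-1)*W * f (S t) / D) := by
    have hlt : (m:ℝ) * Real.exp W < (m:ℝ) * Real.exp ((L-1)*W * f (S t) / D) := by
      calc (m:ℝ) * Real.exp W = Real.exp W * m := mul_comm _ _
        _ < Phi t := hterm
        _ ≤ (m:ℝ) * Real.exp ((L-1)*W * f (S t) / D) := hT
    exact lt_of_mul_lt_mul_left hlt hm0.le
  have h2 : W < (L-1)*W * f (S t) / D := Real.exp_lt_exp.mp h1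
  have h3 : W * D < (L-1)*W * f (S t) := (lt_div_iff₀ hD).mp h2
  have h4 : D < (L-1) * f (S t) := by
    have h3' : W * D < W * ((L-1) * f (S t)) := by linarith [h3]
    exact lt_of_mul_lt_mul_left h3' hWpos.le
  have h5 : f Sstar ≤ (L + 1) * f (S t) := by
    have hfSt : 0 ≤ f (S t) := hf_nonneg _
    rw [hDdef] at h4
    nlinarith
  have hLe : Real.exp 1 * (m:ℝ) ^ (1/W) = L := by
    rw [hLdef, hlam, Real.mul_rpow (Real.exp_pos W).le (by positivity)]
    congr 1
    rw [Real.rpow_def_of_pos (Real.exp_pos W), Real.log_exp, mul_one_div,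
      div_self hWpos.ne']
  rw [ge_iff_le, div_le_iff₀ (by rw [hLe]; linarith), hLe]
  linarith
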